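/- Let F ⊆ L be a field extension of transcendence degree strictly greater than 1. Then the space Zar(L|F) of valuation subrings of L containing F is not a Noetherian topological space. -/

import Mathlib

/-- The Zariski topology on the set of valuation subrings of a field `K`. -/
instance zariskiTopology (K : Type*) [Field K] : TopologicalSpace (ValuationSubring K) :=
  TopologicalSpace.generateFrom {U | ∃ x : K, U = {V : ValuationSubring K | x ∈ V}}

/-- The Zariski space `Zar(D)`: valuation subrings of `K` containing the image of `D`. -/
def zarSet (D K : Type*) [CommRing D] [Field K] [Algebra D K] : Set (ValuationSubring K) :=
  {V | ∀ d : D, algebraMap D K d ∈ V}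

open MvPolynomial in
/-- The pair `(x^(n+1)/y, y/x^n)` is algebraically independent whenever `(x, y)` is. -/
lemma aux_indep12 {F L : Type*} [Field F] [Field L] [Algebra F L] {x y : L}
    (hxy : AlgebraicIndependent F ![x, y]) (n : ℕ) :
    AlgebraicIndependent F ![x ^ (n + 1) / y, y / x ^ n] := by
  have hx0 : x ≠ 0 := by simpa using hxy.ne_zero 0
  have hy0 : y ≠ 0 := by simpa using hxy.ne_zero 1
  set w : L := x ^ (n + 1) / y with hw
  set s : L := y / x ^ n with hs
  rw [algebraicIndependent_iff_injective_aeval]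
  rw [injective_iff_map_eq_zero]
  intro P hP
  by_contra hP0
  obtain ⟨e, he⟩ := MvPolynomial.support_nonempty.mpr hP0
  set D := P.support.sup (fun m => max (m 0) (m 1)) with hD
  set g : (Fin 2 →₀ ℕ) → (Fin 2 →₀ ℕ) := fun m =>
    Finsupp.single 0 ((n + 1) * m 0 + n * D - n * m 1) + Finsupp.single 1 (m 1 + D - m 0)
    with hgdef
  have hg0 : ∀ m : Fin 2 →₀ ℕ, g m 0 = (n + 1) * m 0 + n * D - n * m 1 := by
    intro m; simp [hgdef, Finsupp.single_apply]
  have hg1 : ∀ m : Fin 2 →₀ ℕ, g m 1 = m 1 + D - m 0 := by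
    intro m; simp [hgdef, Finsupp.single_apply]
  set Q : MvPolynomial (Fin 2) F := ∑ m ∈ P.support, monomial (g m) (coeff m P) with hQ
  have hb0 : ∀ m ∈ P.support, m 0 ≤ D := fun m hm =>
    le_trans (le_max_left _ _) (Finset.le_sup (f := fun m : Fin 2 →₀ ℕ => max (m 0) (m 1)) hm)
  have hb1 : ∀ m ∈ P.support, m 1 ≤ D := fun m hm =>
    le_trans (le_max_right _ _) (Finset.le_sup (f := fun m : Fin 2 →₀ ℕ => max (m 0) (m 1)) hm)
  have hmono : ∀ (v : Fin 2 → L) (m : Fin 2 →₀ ℕ) (c : F),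
      aeval v (monomial m c) = algebraMap F L c * (v 0 ^ m 0 * v 1 ^ m 1) := by
    intro v m c
    rw [aeval_monomial]
    congr 1
    rw [Finsupp.prod_fintype _ _ (fun i => pow_zero (v i))]
    exact Fin.prod_univ_two _
  have key : aeval ![x, y] Q = x ^ (n * D) * y ^ D * aeval ![w, s] P := by
    rw [hQ, map_sum]
    conv_rhs => rw [← MvPolynomial.support_sum_monomial_coeff P, map_sum, Finset.mul_sum]
    refine Finset.sum_congr rfl fun m hm => ?_
    rw [hmono, hmono]
    simp only [Matrix.cons_val_zero, Matrix.cons_val_one, Matrix.head_cons]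
    have h0 : m 0 ≤ D := hb0 m hm
    have h1 : m 1 ≤ D := hb1 m hm
    have hle1 : n * m 1 ≤ (n + 1) * m 0 + n * D :=
      le_trans (Nat.mul_le_mul_left n h1) (Nat.le_add_left _ _)
    have hx1 : x ^ (g m 0) = x ^ ((n + 1) * m 0 + n * D) / x ^ (n * m 1) := by
      rw [eq_div_iff (pow_ne_zero _ hx0), ← pow_add]
      congr 1
      rw [hg0]
      exact Nat.sub_add_cancel hle1
    have hy1 : y ^ (g m 1) = y ^ (m 1 + D) / y ^ (m 0) := by
      rw [eq_div_iff (pow_ne_zero _ hy0), ← pow_add]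
      congr 1
      rw [hg1]
      omega
    rw [hx1, hy1, hw, hs, div_pow, div_pow, ← pow_mul, ← pow_mul]
    rw [div_mul_div_comm, div_mul_div_comm]
    field_simp
    ring
  have hQ0 : Q = 0 := by
    have h1 : aeval ![x, y] Q = 0 := by rw [key, hP, mul_zero]
    exact algebraicIndependent_iff_injective_aeval.mp hxy (by rw [h1, map_zero])
  have hcoeff : coeff (g e) Q = coeff e P := by
    rw [hQ, MvPolynomial.coeff_sum]
    rw [Finset.sum_eq_single_of_mem e he]
    · rw [MvPolynomial.coeff_monomial, if_pos rfl]
    · intro m hm hne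
      rw [MvPolynomial.coeff_monomial, if_neg]
      intro hgm
      apply hne
      have E0 : (n + 1) * m 0 + n * D - n * m 1 = (n + 1) * e 0 + n * D - n * e 1 := by
        have h := DFunLike.congr_fun hgm 0; rwa [hg0, hg0] at h
      have E1 : m 1 + D - m 0 = e 1 + D - e 0 := by
        have h := DFunLike.congr_fun hgm 1; rwa [hg1, hg1] at h
      have hm0 := hb0 m hm; have hm1 := hb1 m hm
      have he0 := hb0 e he; have he1 := hb1 e he
      have l1 : n * m 1 ≤ (n + 1) * m 0 + n * D :=
        le_trans (Nat.mul_le_mul_left n hm1) (Nat.le_add_left _ _)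
      have l2 : n * e 1 ≤ (n + 1) * e 0 + n * D :=
        le_trans (Nat.mul_le_mul_left n he1) (Nat.le_add_left _ _)
      have l3 : m 0 ≤ m 1 + D := le_trans hm0 (Nat.le_add_left _ _)
      have l4 : e 0 ≤ e 1 + D := le_trans he0 (Nat.le_add_left _ _)
      zify [l1, l2, l3, l4] at E0 E1
      have h00 : (m 0 : ℤ) = e 0 := by linear_combination E0 + (n : ℤ) * E1
      have h11 : (m 1 : ℤ) = e 1 := by linear_combination E1 + h00
      ext i
      fin_cases i
      · exact_mod_cast h00
      · exact_mod_cast h11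
  rw [hQ0] at hcoeff
  simp only [MvPolynomial.coeff_zero] at hcoeff
  exact (MvPolynomial.mem_support_iff.mp he) hcoeff.symm

/-- For each `n`, there is a valuation subring of `L` containing `F` and `x^(n+1)/y`
but not `x^i/y` for `i ≤ n`. -/
lemma aux_exists12 {F L : Type*} [Field F] [Field L] [Algebra F L] {x y : L}
    (hxy : AlgebraicIndependent F ![x, y]) (n : ℕ) :
    ∃ V : ValuationSubring L, (∀ d : F, algebraMap F L d ∈ V) ∧
      (x ^ (n + 1) / y ∈ V) ∧ ∀ i ≤ n, x ^ i / y ∉ V := by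
  have hx0 : x ≠ 0 := by simpa using hxy.ne_zero 0
  have hy0 : y ≠ 0 := by simpa using hxy.ne_zero 1
  set w : L := x ^ (n + 1) / y with hw
  set s : L := y / x ^ n with hs
  have hws := aux_indep12 hxy n
  have hxws : x = w * s := by
    rw [hw, hs]; field_simp; ring
  set A : Subring L := (Algebra.adjoin F (Set.range ![w, s])).toSubring with hA
  have hwA : w ∈ A := Subalgebra.mem_toSubring.mpr (Algebra.subset_adjoin ⟨0, rfl⟩)
  have hsA : s ∈ A := Subalgebra.mem_toSubring.mpr (Algebra.subset_adjoin ⟨1, rfl⟩)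
  have hxA : x ∈ A := by rw [hxws]; exact mul_mem hwA hsA
  set I : Ideal A := Ideal.span {⟨w, hwA⟩, ⟨s, hsA⟩} with hI
  have hItop : I ≠ ⊤ := by
    intro htop
    have h1 : (1 : A) ∈ I := htop ▸ Submodule.mem_top
    obtain ⟨a, b, hab⟩ := Ideal.mem_span_pair.mp h1
    have habL : (a : L) * w + (b : L) * s = 1 := by
      have h := congrArg Subtype.val hab
      push_cast at h
      exact h
    have ha' : (a : L) ∈ (MvPolynomial.aeval (R := F) ![w, s]).range := by
      rw [← Algebra.adjoin_range_eq_range_aeval]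
      exact Subalgebra.mem_toSubring.mp a.2
    have hb' : (b : L) ∈ (MvPolynomial.aeval (R := F) ![w, s]).range := by
      rw [← Algebra.adjoin_range_eq_range_aeval]
      exact Subalgebra.mem_toSubring.mp b.2
    obtain ⟨p, hp⟩ := ha'
    obtain ⟨q, hq⟩ := hb'
    have heval : MvPolynomial.aeval (R := F) ![w, s] (p * MvPolynomial.X 0 + q * MvPolynomial.X 1) =
        MvPolynomial.aeval (R := F) ![w, s] 1 := by
      have hp' : (MvPolynomial.aeval (R := F) ![w, s]) p = (a : L) := hp
      have hq' : (MvPolynomial.aeval (R := F) ![w, s]) q = (b : L) := hq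
      simp only [map_add, map_mul, map_one, MvPolynomial.aeval_X]
      rw [hp', hq']
      simpa using habL
    have heq := algebraicIndependent_iff_injective_aeval.mp hws heval
    have hcc := congrArg MvPolynomial.constantCoeff heq
    simp at hcc
  obtain ⟨M, hMmax, hIM⟩ := Ideal.exists_le_maximal I hItop
  haveI := hMmax.isPrime
  obtain ⟨V, hV⟩ := (LocalSubring.ofPrime A M).exists_le_valuationSubring
  have hle : A ≤ V.toSubring := le_trans (LocalSubring.le_ofPrime A M) hV.1
  have hsM : (⟨s, hsA⟩ : A) ∈ M := hIM (Ideal.subset_span (by simp))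
  -- `s` is a nonunit of the local ring `ofPrime A M`
  have hsnonO : ¬ IsUnit (algebraMap A (LocalSubring.ofPrime A M).toSubring ⟨s, hsA⟩) := by
    rw [IsLocalization.AtPrime.isUnit_to_map_iff (LocalSubring.ofPrime A M).toSubring M]
    exact fun hc => hc hsM
  -- hence `s` is a nonunit of `V`
  have hsV : ¬ IsUnit (⟨s, hle hsA⟩ : V.toSubring) := by
    intro hu
    apply hsnonO
    refine hV.2.map_nonunit _ ?_
    have : Subring.inclusion hV.1 (algebraMap A (LocalSubring.ofPrime A M).toSubring ⟨s, hsA⟩) =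
        (⟨s, hle hsA⟩ : V.toSubring) := Subtype.ext rfl
    rw [this]
    exact hu
  refine ⟨V, fun d => hle (Subalgebra.mem_toSubring.mpr (Subalgebra.algebraMap_mem _ d)),
    hle hwA, ?_⟩
  intro i hi hmem
  have hxV : x ∈ V.toSubring := hle hxA
  have htV : x ^ i / y ∈ V.toSubring := hmem
  have hxsplit : x ^ (n - i) * x ^ i = x ^ n := by rw [← pow_add]; congr 1; omega
  have hu_eq : (s * x ^ (n - i)) * (x ^ i / y) = 1 := by
    rw [hs]
    field_simp
    linear_combination hxsplit
  have hunit : IsUnit ((⟨s, hle hsA⟩ : V.toSubring) * ⟨x ^ (n - i), pow_mem hxV (n - i)⟩) :=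
    IsUnit.of_mul_eq_one ⟨x ^ i / y, htV⟩ (Subtype.ext hu_eq)
  exact hsV (isUnit_of_mul_isUnit_left hunit)

theorem stmt12 (F L : Type*) [Field F] [Field L] [Algebra F L]
    -- transcendence degree strictly greater than 1: there exist two algebraically
    -- independent elements
    (htr : ∃ x y : L, AlgebraicIndependent F ![x, y]) :
    ¬ TopologicalSpace.NoetherianSpace (zarSet F L) := by
  obtain ⟨x, y, hxy⟩ := htr
  intro hNoeth
  have hopen : ∀ k : ℕ, IsOpen {V : ValuationSubring L | x ^ k / y ∈ V} :=
    fun k => TopologicalSpace.isOpen_generateFrom_of_mem ⟨x ^ k / y, rfl⟩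
  set f : ℕ → TopologicalSpace.Opens (zarSet F L) := fun n =>
    ⟨Subtype.val ⁻¹' (⋃ i ∈ Finset.range n, {V : ValuationSubring L | x ^ (i + 1) / y ∈ V}),
      (isOpen_biUnion (fun i _ => hopen (i + 1))).preimage continuous_subtype_val⟩ with hf
  have hfmono : Monotone f := by
    intro a b hab
    intro W hW
    simp only [hf, TopologicalSpace.Opens.coe_mk, TopologicalSpace.Opens.mem_mk, Set.mem_preimage, Set.mem_iUnion,
      Set.mem_setOf_eq] at hW ⊢
    obtain ⟨i, hi, h⟩ := hW
    exact ⟨i, Finset.mem_range.mpr (lt_of_lt_of_le (Finset.mem_range.mp hi) hab), h⟩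
  obtain ⟨N, hN⟩ := wellFoundedGT_iff_monotone_chain_condition.mp hNoeth ⟨f, hfmono⟩
  obtain ⟨V, hVzar, hVmem, hVnot⟩ := aux_exists12 hxy N
  have hVin : (⟨V, hVzar⟩ : zarSet F L) ∈ f (N + 1) := by
    simp only [hf, TopologicalSpace.Opens.mem_mk, Set.mem_preimage, Set.mem_iUnion,
      Set.mem_setOf_eq]
    exact ⟨N, Finset.mem_range.mpr (Nat.lt_succ_self N), hVmem⟩
  have hVnotin : (⟨V, hVzar⟩ : zarSet F L) ∉ f N := by
    simp only [hf, TopologicalSpace.Opens.mem_mk, Set.mem_preimage, Set.mem_iUnion,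
      Set.mem_setOf_eq]
    rintro ⟨i, hi, h⟩
    exact hVnot (i + 1) (Finset.mem_range.mp hi) h
  have hfN : f N = f (N + 1) := hN (N + 1) (Nat.le_succ N)
  exact hVnotin (hfN ▸ hVin)
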